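/- Let X be a Banach space and (W_n) a nested increasing sequence (W_n ⊆ W_{n+1}) of closed, convex, bounded, circled subsets of X, each with empty interior, such that Y = ⋃_{n=1}^∞ W_n is dense in X. Then for every u ∈ X \ Y there exists v ∈ X \ Y such that limsup_{n→∞} dist(v, W_n)/dist(u, W_n) = ∞ and liminf_{n→∞} dist(v, W_n)/dist(u, W_n) = 0. -/

import Mathlib

open Metric Filter

lemma far_point_aux {X : Type*} [NormedAddCommGroup X] [NormedSpace ℝ X]
    {C : Set X} (hCc : IsClosed C) (hCv : Convex ℝ C) (hne : C.Nonempty)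
    (hCi : interior C = ∅) (s : X) {ε : ℝ} (hε : 0 < ε) :
    ∃ x : X, ‖x - s‖ ≤ ε ∧ ε / 2 < Metric.infDist x C := by
  by_contra hcon
  push_neg at hcon
  have hsub : Metric.ball s (ε / 2) ⊆ C := by
    intro x hx
    by_contra hxC
    obtain ⟨f, σ, hfC, hfx⟩ := geometric_hahn_banach_closed_point hCv hCc hxC
    have hfn : (0:ℝ) ≤ ‖f‖ := norm_nonneg f
    set η : ℝ := (f x - σ) / (ε / 2 + ‖f‖ + 1) with hη_def
    have hηpos : 0 < η := div_pos (by linarith) (by linarith)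
    obtain ⟨g, hg1, hg2⟩ := f.exists_lt_apply_of_lt_opNorm (show ‖f‖ - η < ‖f‖ by linarith)
    obtain ⟨g', hg'1, hg'2⟩ : ∃ g' : X, ‖g'‖ ≤ 1 ∧ ‖f‖ - η < f g' := by
      rcases le_or_gt 0 (f g) with h | h
      · exact ⟨g, hg1.le, by rwa [Real.norm_eq_abs, abs_of_nonneg h] at hg2⟩
      · refine ⟨-g, by simpa using hg1.le, ?_⟩
        rw [map_neg]
        rwa [Real.norm_eq_abs, abs_of_neg h] at hg2
    set z : X := x + (ε / 2) • g' with hz_def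
    have hzs : ‖z - s‖ ≤ ε := by
      have h1 : ‖z - s‖ ≤ ‖x - s‖ + ‖(ε / 2) • g'‖ := by
        rw [hz_def]
        calc ‖x + (ε/2) • g' - s‖ = ‖(x - s) + (ε/2) • g'‖ := by
              congr 1; abel
          _ ≤ ‖x - s‖ + ‖(ε/2) • g'‖ := norm_add_le _ _
      have h2 : ‖(ε / 2) • g'‖ ≤ ε / 2 := by
        rw [norm_smul, Real.norm_eq_abs, abs_of_pos (by linarith)]
        nlinarith
      have h3 : ‖x - s‖ < ε / 2 := by
        rw [mem_ball, dist_eq_norm] at hx; exact hx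
      linarith
    have hzC : Metric.infDist z C ≤ ε / 2 := hcon z hzs
    obtain ⟨w, hwC, hw⟩ := (Metric.infDist_lt_iff hne).mp
      (lt_of_le_of_lt hzC (by linarith : ε / 2 < ε / 2 + η))
    have hfw : f w < σ := hfC w hwC
    have hfz : f z = f x + (ε / 2) * f g' := by
      rw [hz_def, map_add, map_smul, smul_eq_mul]
    have hlip : f z - f w ≤ ‖f‖ * (ε / 2 + η) := by
      calc f z - f w = f (z - w) := by rw [map_sub]
        _ ≤ ‖f (z - w)‖ := le_abs_self _
        _ ≤ ‖f‖ * ‖z - w‖ := f.le_opNorm _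
        _ ≤ ‖f‖ * (ε / 2 + η) := by
            apply mul_le_mul_of_nonneg_left _ hfn
            rw [← dist_eq_norm]; exact hw.le
    have h5 : f x + (ε / 2) * (‖f‖ - η) ≤ f z := by
      rw [hfz]
      have := mul_le_mul_of_nonneg_left hg'2.le (by linarith : (0:ℝ) ≤ ε / 2)
      linarith
    have hkey : η * (ε / 2 + ‖f‖ + 1) = f x - σ := by
      rw [hη_def]; field_simp
    nlinarith [hlip, h5, hfw, hfx, hηpos, hfn, hε]
  have : s ∈ interior C :=
    mem_interior.mpr ⟨Metric.ball s (ε / 2), hsub, Metric.isOpen_ball,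
      Metric.mem_ball_self (by linarith)⟩
  rw [hCi] at this
  exact this

/-- Auxiliary state for the recursive construction. -/
structure BState (X : Type*) where
  k : ℕ
  eps : ℝ
  s : X
  a : ℕ
  b : ℕ
  x : X

/-- Dependent-choice chain. -/
noncomputable def chainSeq {S : Type*} (P : S → Prop) (R : S → S → Prop)
    (s0 : S) (h0 : P s0) (step : ∀ s, P s → ∃ t, P t ∧ R s t) : ℕ → {s : S // P s}
  | 0 => ⟨s0, h0⟩
  | (n+1) =>
      let p := chainSeq P R s0 h0 step n
      ⟨(step p.1 p.2).choose, (step p.1 p.2).choose_spec.1⟩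

lemma chainSeq_rel {S : Type*} (P : S → Prop) (R : S → S → Prop)
    (s0 : S) (h0 : P s0) (step : ∀ s, P s → ∃ t, P t ∧ R s t) (n : ℕ) :
    R (chainSeq P R s0 h0 step n).1 (chainSeq P R s0 h0 step (n+1)).1 :=
  (step (chainSeq P R s0 h0 step n).1 (chainSeq P R s0 h0 step n).2).choose_spec.2



/-- Let `X` be a Banach space (real or complex, scalar field `𝕜`) and `(W_n)` a nested
increasing sequence of closed, convex, bounded, circled subsets of `X`, each with empty
interior, with `Y = ⋃ W_n` dense in `X`.  Then for every `u ∈ X \ Y` there is `v ∈ X \ Y`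
with `limsup dist(v, W_n)/dist(u, W_n) = ∞` and `liminf dist(v, W_n)/dist(u, W_n) = 0`
(expressed via `∃ᶠ`: the ratios are frequently above any `M` and frequently below any
`δ > 0`). -/
theorem stmt_9 {𝕜 X : Type*} [RCLike 𝕜]
    [NormedAddCommGroup X] [NormedSpace ℝ X] [NormedSpace 𝕜 X] [IsScalarTower ℝ 𝕜 X]
    [CompleteSpace X]
    (W : ℕ → Set X)
    (hmono : ∀ n, W n ⊆ W (n + 1))
    (hclosed : ∀ n, IsClosed (W n))
    (hconv : ∀ n, Convex ℝ (W n))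
    (hbdd : ∀ n, Bornology.IsBounded (W n))
    (hcircled : ∀ n, ∀ c : 𝕜, ‖c‖ ≤ 1 → ∀ w ∈ W n, c • w ∈ W n)
    (hint : ∀ n, interior (W n) = ∅)
    (hdense : Dense (⋃ n, W n))
    (u : X) (hu : u ∉ ⋃ n, W n) :
    ∃ v : X, v ∉ (⋃ n, W n) ∧
      (∀ M : ℝ, ∃ᶠ n in Filter.atTop,
        M < Metric.infDist v (W n) / Metric.infDist u (W n)) ∧
      (∀ δ : ℝ, 0 < δ → ∃ᶠ n in Filter.atTop,
        Metric.infDist v (W n) / Metric.infDist u (W n) < δ) := by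
  classical
  have hWmono : Monotone W := monotone_nat_of_le_succ hmono
  obtain ⟨y₀, hy₀⟩ : (⋃ n, W n).Nonempty := hdense.nonempty
  obtain ⟨m₀, hm₀⟩ : ∃ m, y₀ ∈ W m := Set.mem_iUnion.mp hy₀
  have hWne : ∀ n, m₀ ≤ n → (W n).Nonempty := fun n h => ⟨y₀, hWmono h hm₀⟩
  have hunot : ∀ n, u ∉ W n := fun n hn => hu (Set.mem_iUnion.mpr ⟨n, hn⟩)
  have hDpos : ∀ n, m₀ ≤ n → 0 < infDist u (W n) := fun n h =>
    ((hclosed n).notMem_iff_infDist_pos (hWne n h)).mp (hunot n)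
  have hDsmall : ∀ ε : ℝ, 0 < ε → ∀ N : ℕ, ∃ n : ℕ, N ≤ n ∧ infDist u (W n) < ε := by
    intro ε hε N
    obtain ⟨w, hw, hdw⟩ := Metric.mem_closure_iff.mp (hdense.closure_eq ▸ Set.mem_univ u :
      u ∈ closure (⋃ n, W n)) ε hε
    obtain ⟨m, hm⟩ := Set.mem_iUnion.mp hw
    exact ⟨max N m, le_max_left _ _,
      lt_of_le_of_lt (Metric.infDist_le_dist_of_mem (hWmono (le_max_right N m) hm)) hdw⟩
  -- the step relation
  set R : BState X → BState X → Prop := fun st st' =>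
      st'.k = st.k + 1 ∧
      32 * st'.eps ≤ st.eps ∧
      3 * ((st.k : ℝ) + 1) * st'.eps ≤ infDist u (W st.b) ∧
      st.k + 1 ≤ st'.a ∧ m₀ ≤ st'.a ∧
      ((st.k : ℝ) + 1) * infDist u (W st'.a) < st'.eps / 4 ∧
      ‖st'.x - st.s‖ ≤ st'.eps ∧
      st'.eps / 2 < infDist st'.x (W st'.a) ∧
      ‖st'.s - st'.x‖ ≤ st'.eps / 8 ∧
      st'.a ≤ st'.b with hR_def
  set P : BState X → Prop := fun st => 0 < st.eps ∧ st.s ∈ W st.b ∧ m₀ ≤ st.b with hP_def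
  have key : ∀ st : BState X, P st → ∃ st', P st' ∧ R st st' := by
    intro st hst
    obtain ⟨heps, hsb, hb⟩ := hst
    have hDb : 0 < infDist u (W st.b) := hDpos st.b hb
    set ε' : ℝ := min (st.eps / 32) (infDist u (W st.b) / (3 * ((st.k : ℝ) + 1))) with hε'
    have hkpos : (0:ℝ) < (st.k : ℝ) + 1 := by positivity
    have hε'pos : 0 < ε' := lt_min (by linarith) (div_pos hDb (by positivity))
    obtain ⟨a', ha'N, ha'D⟩ := hDsmall (ε' / (4 * ((st.k : ℝ) + 1))) (by positivity)
      (max (st.k + 1) m₀)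
    have ha'm : m₀ ≤ a' := le_trans (le_max_right _ _) ha'N
    have ha'k : st.k + 1 ≤ a' := le_trans (le_max_left _ _) ha'N
    obtain ⟨x', hx'1, hx'2⟩ := far_point_aux (hclosed a') (hconv a') (hWne a' ha'm)
      (hint a') st.s hε'pos
    obtain ⟨w, hw, hdw⟩ := Metric.mem_closure_iff.mp (hdense.closure_eq ▸ Set.mem_univ x' :
      x' ∈ closure (⋃ n, W n)) (ε' / 8) (by positivity)
    obtain ⟨c, hc⟩ := Set.mem_iUnion.mp hw
    refine ⟨⟨st.k + 1, ε', w, a', max c a', x'⟩,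
      ⟨hε'pos, hWmono (le_max_left c a') hc, le_trans ha'm (le_max_right c a')⟩,
      rfl, ?_, ?_, ha'k, ha'm, ?_, hx'1, hx'2, ?_, le_max_right c a'⟩
    · have := min_le_left (st.eps / 32) (infDist u (W st.b) / (3 * ((st.k : ℝ) + 1)))
      rw [← hε'] at this; linarith
    · have h := min_le_right (st.eps / 32) (infDist u (W st.b) / (3 * ((st.k : ℝ) + 1)))
      rw [← hε'] at h
      rw [le_div_iff₀ (by positivity)] at h
      nlinarith
    · have h1 : ((st.k : ℝ) + 1) * infDist u (W a')
          < ((st.k : ℝ) + 1) * (ε' / (4 * ((st.k : ℝ) + 1))) :=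
        mul_lt_mul_of_pos_left ha'D hkpos
      have h2 : ((st.k : ℝ) + 1) * (ε' / (4 * ((st.k : ℝ) + 1))) = ε' / 4 := by
        field_simp
      linarith
    · show ‖w - x'‖ ≤ ε' / 8
      rw [← dist_eq_norm, dist_comm]
      exact hdw.le
  -- build the chain
  have h0 : P ⟨0, 1, y₀, m₀, m₀, y₀⟩ := ⟨one_pos, hm₀, le_refl m₀⟩
  set F : ℕ → {s : BState X // P s} := chainSeq P R ⟨0, 1, y₀, m₀, m₀, y₀⟩ h0 key with hF
  have hrel : ∀ n, R (F n).1 (F (n+1)).1 := fun n => chainSeq_rel P R _ h0 key n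
  have hk : ∀ n, (F n).1.k = n := by
    intro n
    induction n with
    | zero => rfl
    | succ n ih => rw [(hrel n).1, ih]
  have heps_pos : ∀ n, 0 < (F n).1.eps := fun n => (F n).2.1
  have heps_step : ∀ n, 32 * (F (n+1)).1.eps ≤ (F n).1.eps := fun n => (hrel n).2.1
  have heps_decay : ∀ k m, (F (k + m)).1.eps ≤ (F k).1.eps * (32:ℝ)⁻¹ ^ m := by
    intro k m
    induction m with
    | zero => simp
    | succ m ih =>
      have h1 : (F (k + m + 1)).1.eps ≤ (F (k + m)).1.eps * 32⁻¹ := by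
        have := heps_step (k + m); linarith
      calc (F (k + (m+1))).1.eps = (F ((k + m) + 1)).1.eps := by ring_nf
        _ ≤ (F (k + m)).1.eps * 32⁻¹ := h1
        _ ≤ ((F k).1.eps * (32:ℝ)⁻¹ ^ m) * 32⁻¹ :=
            mul_le_mul_of_nonneg_right ih (by norm_num)
        _ = (F k).1.eps * (32:ℝ)⁻¹ ^ (m+1) := by ring
  have hdist_step : ∀ n, dist ((F n).1.s) ((F (n+1)).1.s) ≤ (9/8) * (F (n+1)).1.eps := by
    intro n
    obtain ⟨-, -, -, -, -, -, hxs, -, hsx, -⟩ := hrel n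
    calc dist ((F n).1.s) ((F (n+1)).1.s)
        ≤ dist ((F n).1.s) ((F (n+1)).1.x) + dist ((F (n+1)).1.x) ((F (n+1)).1.s) :=
          dist_triangle _ _ _
      _ ≤ (F (n+1)).1.eps + (F (n+1)).1.eps / 8 := by
          simp only [dist_eq_norm']
          exact add_le_add hxs hsx
      _ = (9/8) * (F (n+1)).1.eps := by ring
  -- Cauchy
  have hgeom : ∀ n, dist ((F n).1.s) ((F (n+1)).1.s) ≤ (F 0).1.eps * (32:ℝ)⁻¹ ^ n := by
    intro n
    have h1 := hdist_step n
    have h2 : (F (0 + (n+1))).1.eps ≤ (F 0).1.eps * (32:ℝ)⁻¹ ^ (n+1) := heps_decay 0 (n+1)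
    have h3 : (0:ℝ) < (32:ℝ)⁻¹ ^ n := by positivity
    have h4 := heps_pos (n+1)
    simp only [Nat.zero_add] at h2
    have : (9/8 : ℝ) * ((F 0).1.eps * (32:ℝ)⁻¹ ^ (n+1)) ≤ (F 0).1.eps * (32:ℝ)⁻¹ ^ n := by
      have : (32:ℝ)⁻¹ ^ (n+1) = (32:ℝ)⁻¹ ^ n * 32⁻¹ := by ring
      rw [this]
      nlinarith [heps_pos 0]
    nlinarith
  have hcauchy : CauchySeq (fun n => (F n).1.s) :=
    cauchySeq_of_le_geometric (32:ℝ)⁻¹ ((F 0).1.eps) (by norm_num) hgeom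
  obtain ⟨v, hv⟩ := cauchySeq_tendsto_of_complete hcauchy
  -- tail estimate
  have htail : ∀ k, dist ((F k).1.s) v ≤ 3 * (F (k+1)).1.eps := by
    intro k
    have hu' : ∀ m, dist ((F (m + k)).1.s) ((F (m + 1 + k)).1.s)
        ≤ ((9/8) * (F (k+1)).1.eps) * (32:ℝ)⁻¹ ^ m := by
      intro m
      have h1 : (m + 1 + k) = (m + k) + 1 := by ring
      rw [h1]
      have h2 := hdist_step (m + k)
      have h3 : (F ((k+1) + m)).1.eps ≤ (F (k+1)).1.eps * (32:ℝ)⁻¹ ^ m := heps_decay (k+1) m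
      have h4 : (k+1) + m = (m + k) + 1 := by ring
      rw [h4] at h3
      nlinarith [heps_pos ((m+k)+1)]
    have ha : Filter.Tendsto (fun m => (F (m + k)).1.s) atTop (nhds v) :=
      hv.comp (tendsto_add_atTop_nat k)
    have := dist_le_of_le_geometric_of_tendsto₀ (32:ℝ)⁻¹ ((9/8) * (F (k+1)).1.eps)
      (by norm_num) hu' ha
    simp only [Nat.zero_add] at this
    calc dist ((F k).1.s) v ≤ ((9/8) * (F (k+1)).1.eps) / (1 - 32⁻¹) := this
      _ ≤ 3 * (F (k+1)).1.eps := by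
          rw [div_le_iff₀ (by norm_num)]
          nlinarith [heps_pos (k+1)]
  -- far estimate at A (k+1)
  have hAfar : ∀ k, (F (k+1)).1.eps / 4 < infDist v (W ((F (k+1)).1.a)) := by
    intro k
    obtain ⟨-, -, -, -, -, -, -, hfar, hsx, -⟩ := hrel k
    have h1 : dist ((F (k+1)).1.x) v ≤ (F (k+1)).1.eps / 8 + 3 * (F (k+2)).1.eps := by
      calc dist ((F (k+1)).1.x) v
          ≤ dist ((F (k+1)).1.x) ((F (k+1)).1.s) + dist ((F (k+1)).1.s) v :=
            dist_triangle _ _ _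
        _ ≤ (F (k+1)).1.eps / 8 + 3 * (F (k+2)).1.eps := by
            refine add_le_add ?_ (htail (k+1))
            rw [dist_eq_norm, norm_sub_rev]
            exact hsx
    have h2 : 32 * (F (k+2)).1.eps ≤ (F (k+1)).1.eps := heps_step (k+1)
    have h3 := Metric.infDist_le_infDist_add_dist
      (x := (F (k+1)).1.x) (y := v) (s := W ((F (k+1)).1.a))
    have h4 := heps_pos (k+2)
    linarith
  -- v is not in the union
  have hvnot : v ∉ ⋃ n, W n := by
    intro hvmem
    obtain ⟨m, hm⟩ := Set.mem_iUnion.mp hvmem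
    obtain ⟨-, -, -, hak, -, -, -, -, -, -⟩ := hrel m
    rw [hk m] at hak
    have hsub : W m ⊆ W ((F (m+1)).1.a) := hWmono (le_trans (Nat.le_succ m) hak)
    have h0' : infDist v (W ((F (m+1)).1.a)) = 0 := Metric.infDist_zero_of_mem (hsub hm)
    have := hAfar m
    rw [h0'] at this
    have := heps_pos (m+1)
    linarith
  refine ⟨v, hvnot, ?_, ?_⟩
  · -- frequently large
    intro M
    rw [Filter.frequently_atTop]
    intro N
    set k := max N ⌈M⌉₊ with hkdef
    obtain ⟨-, -, -, hak, ham, haD, -, -, -, -⟩ := hrel k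
    rw [hk k] at hak haD
    refine ⟨(F (k+1)).1.a, le_trans (le_trans (le_max_left N ⌈M⌉₊) (Nat.le_succ k)) hak, ?_⟩
    have hDa : 0 < infDist u (W ((F (k+1)).1.a)) := hDpos _ ham
    have h1 : ((k:ℝ) + 1) < infDist v (W ((F (k+1)).1.a)) / infDist u (W ((F (k+1)).1.a)) := by
      rw [lt_div_iff₀ hDa]
      have := hAfar k
      linarith
    have h2 : M ≤ (k : ℝ) := by
      calc M ≤ (⌈M⌉₊ : ℝ) := Nat.le_ceil M
        _ ≤ (k : ℝ) := Nat.cast_le.mpr (le_max_right N ⌈M⌉₊)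
    linarith
  · -- frequently small
    intro δ hδ
    rw [Filter.frequently_atTop]
    intro N
    set j := max N ⌈δ⁻¹⌉₊ with hjdef
    obtain ⟨-, -, -, hak, -, -, -, -, -, hab⟩ := hrel j
    rw [hk j] at hak
    obtain ⟨-, -, h3D, -, -, -, -, -, -, -⟩ := hrel (j+1)
    rw [hk (j+1)] at h3D
    -- the index
    refine ⟨(F (j+1)).1.b, le_trans (le_trans (le_max_left N ⌈δ⁻¹⌉₊) (Nat.le_succ j))
      (le_trans hak hab), ?_⟩
    have hbm : m₀ ≤ (F (j+1)).1.b := (F (j+1)).2.2.2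
    have hDb : 0 < infDist u (W ((F (j+1)).1.b)) := hDpos _ hbm
    have hclose : infDist v (W ((F (j+1)).1.b)) ≤ 3 * (F (j+2)).1.eps := by
      calc infDist v (W ((F (j+1)).1.b)) ≤ dist v ((F (j+1)).1.s) :=
            Metric.infDist_le_dist_of_mem (F (j+1)).2.2.1
        _ = dist ((F (j+1)).1.s) v := dist_comm _ _
        _ ≤ 3 * (F (j+2)).1.eps := htail (j+1)
    have hjj : ((j:ℝ) + 1 + 1) > 0 := by positivity
    have hratio : infDist v (W ((F (j+1)).1.b)) / infDist u (W ((F (j+1)).1.b))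
        ≤ 1 / ((j:ℝ) + 1 + 1) := by
      rw [div_le_div_iff₀ hDb hjj]
      push_cast at h3D
      nlinarith
    have hlast : 1 / ((j:ℝ) + 1 + 1) < δ := by
      rw [div_lt_iff₀ hjj]
      have h1 : δ⁻¹ ≤ (⌈δ⁻¹⌉₊ : ℝ) := Nat.le_ceil _
      have h2 : (⌈δ⁻¹⌉₊ : ℝ) ≤ (j : ℝ) := Nat.cast_le.mpr (le_max_right N ⌈δ⁻¹⌉₊)
      have h3 : δ⁻¹ < (j:ℝ) + 1 + 1 := by linarith
      calc (1:ℝ) = δ * δ⁻¹ := by field_simp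
        _ < δ * ((j:ℝ) + 1 + 1) := by exact mul_lt_mul_of_pos_left h3 hδ
    linarith
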